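/- Under the stated setting, assume conditions (3.3), (3.4), (3.5) hold for constants M, R, K, ω, δ > 0, and let k : ℝⁿ → ℝ be any locally bounded function with k(0) = 0. Then there exists r̃ > 0 such that: for every sampling schedule with MASP r̃, every measurable d : [0,∞) → D, and every solution (x,y) of the closed-loop system (3.7) with x(0)'Px(0) < R², one has x(t)'Px(t) < R² for all t ≥ 0. -/

import Mathlib

open Matrix MeasureTheory Set Filter

noncomputable section

/-- The `m × m` matrix with ones on the subdiagonal and zeros elsewhere. -/
def matA (m : ℕ) : Matrix (Fin m) (Fin m) ℝ :=
  Matrix.of fun i j => if (i : ℕ) = (j : ℕ) + 1 then 1 else 0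

/-- The vector `b = (1,0,…,0)'` as a plain function. -/
def vecbf (m : ℕ) : Fin m → ℝ := fun i => if (i : ℕ) = 0 then 1 else 0

/-- The vector `b = (1,0,…,0)'` in Euclidean space. -/
def vecb (m : ℕ) : EuclideanSpace ℝ (Fin m) := (WithLp.equiv 2 (Fin m → ℝ)).symm (vecbf m)

/-- View a Euclidean vector as a plain function. -/
def ef {m : ℕ} (x : EuclideanSpace ℝ (Fin m)) : Fin m → ℝ := x

/-- Matrix-vector multiplication on Euclidean space. -/
def mulVecE {m : ℕ} (M : Matrix (Fin m) (Fin m) ℝ) (x : EuclideanSpace ℝ (Fin m)) :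
    EuclideanSpace ℝ (Fin m) :=
  (WithLp.equiv 2 (Fin m → ℝ)).symm (M.mulVec (ef x))

/-- Euclidean inner product `x'y`. -/
def ip {m : ℕ} (x y : EuclideanSpace ℝ (Fin m)) : ℝ := ∑ i, x i * y i

/-- Quadratic form `x'Px`. -/
def qf {m : ℕ} (P : Matrix (Fin m) (Fin m) ℝ) (x : EuclideanSpace ℝ (Fin m)) : ℝ :=
  ip x (mulVecE P x)

/-- The saturation function `sat(s) = s / max(1,|s|)`. -/
def sat (s : ℝ) : ℝ := s / max 1 |s|

/-- The vector `c = -(A' + pb')⁻¹ (0,…,0,1)'`. -/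
def cvec (n : ℕ) (p : EuclideanSpace ℝ (Fin (n+1))) : EuclideanSpace ℝ (Fin (n+1)) :=
  (WithLp.equiv 2 (Fin (n+1) → ℝ)).symm
    (-((((matA (n+1))ᵀ + vecMulVec (ef p) (vecbf (n+1)))⁻¹).mulVec (Pi.single (Fin.last n) 1)))

/-- Condition (3.3): `x'P(Ax + f(d,x,u) + bu) < 0` whenever `d ∈ D`, `x'Px = R²` and
`|u - p'x| ≤ K|c'b|`. -/
def Cond33 {l n : ℕ} (D : Set (EuclideanSpace ℝ (Fin l)))
    (f : EuclideanSpace ℝ (Fin l) → EuclideanSpace ℝ (Fin (n+1)) → ℝ → EuclideanSpace ℝ (Fin (n+1)))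
    (P : Matrix (Fin (n+1)) (Fin (n+1)) ℝ) (p : EuclideanSpace ℝ (Fin (n+1))) (R K : ℝ) : Prop :=
  ∀ d ∈ D, ∀ x : EuclideanSpace ℝ (Fin (n+1)), ∀ u : ℝ,
    qf P x = R ^ 2 → |u - ip p x| ≤ K * |ip (cvec n p) (vecb (n+1))| →
      ip x (mulVecE P (mulVecE (matA (n+1)) x + f d x u + u • vecb (n+1))) < 0

/-- Condition (3.4): `|g(d,x,u) + c'f(d,x,u)| < K(c'b)²` whenever `d ∈ D`, `x'Px ≤ R²` and
`|u - p'x| ≤ K|c'b|`. -/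
def Cond34 {l n : ℕ} (D : Set (EuclideanSpace ℝ (Fin l)))
    (f : EuclideanSpace ℝ (Fin l) → EuclideanSpace ℝ (Fin (n+1)) → ℝ → EuclideanSpace ℝ (Fin (n+1)))
    (g : EuclideanSpace ℝ (Fin l) → EuclideanSpace ℝ (Fin (n+1)) → ℝ → ℝ)
    (P : Matrix (Fin (n+1)) (Fin (n+1)) ℝ) (p : EuclideanSpace ℝ (Fin (n+1))) (R K : ℝ) : Prop :=
  ∀ d ∈ D, ∀ x : EuclideanSpace ℝ (Fin (n+1)), ∀ u : ℝ,
    qf P x ≤ R ^ 2 → |u - ip p x| ≤ K * |ip (cvec n p) (vecb (n+1))| →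
      |g d x u + ip (cvec n p) (f d x u)| < K * (ip (cvec n p) (vecb (n+1))) ^ 2

/-- Condition (3.5). -/
def Cond35 {l n : ℕ} (D : Set (EuclideanSpace ℝ (Fin l)))
    (f : EuclideanSpace ℝ (Fin l) → EuclideanSpace ℝ (Fin (n+1)) → ℝ → EuclideanSpace ℝ (Fin (n+1)))
    (g : EuclideanSpace ℝ (Fin l) → EuclideanSpace ℝ (Fin (n+1)) → ℝ → ℝ)
    (P : Matrix (Fin (n+1)) (Fin (n+1)) ℝ) (p : EuclideanSpace ℝ (Fin (n+1)))
    (M R K ω δ : ℝ) : Prop :=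
  ∀ d ∈ D, ∀ x : EuclideanSpace ℝ (Fin (n+1)), ∀ z : ℝ,
    qf P x ≤ R ^ 2 → ω * |z| ≤ 1 →
      ∀ u : ℝ, u = ip p x - K * ip (cvec n p) (vecb (n+1)) * ω * z →
        z * (M * g d x u + M * ip (cvec n p) (f d x u)
              - K * ip (cvec n p) (vecb (n+1)) * ω * ip (vecb (n+1)) (mulVecE P x))
          ≤ (M * K * (ip (cvec n p) (vecb (n+1))) ^ 2 * ω - δ) * z ^ 2
            - ip x (mulVecE P
                (mulVecE (matA (n+1) + vecMulVec (vecbf (n+1)) (ef p) + δ • 1) x + f d x u))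

/-- A sampling schedule with maximum allowable sampling period `r`. -/
def Sched (r : ℝ) (τ : ℕ → ℝ) : Prop :=
  τ 0 = 0 ∧ (∀ i, 0 < τ (i+1) - τ i) ∧ (∀ i, τ (i+1) - τ i ≤ r) ∧
    Tendsto τ atTop atTop

open Classical in
/-- The hybrid feedback `k̃` of (3.6). -/
def ktilde {n : ℕ} (k : EuclideanSpace ℝ (Fin (n+1)) → ℝ)
    (P : Matrix (Fin (n+1)) (Fin (n+1)) ℝ) (p : EuclideanSpace ℝ (Fin (n+1)))
    (R K ω : ℝ) (x : EuclideanSpace ℝ (Fin (n+1))) (y : ℝ) : ℝ :=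
  if R ^ 2 ≤ qf P x then k x
  else ip p x - K * ip (cvec n p) (vecb (n+1)) * sat (ω * (y + ip (cvec n p) x))

/-- A (locally absolutely continuous) solution of the closed-loop sampled-data system (3.7)
with feedback `fb`, sampling times `τ` and disturbance `d`. -/
def Sol37 {l n : ℕ}
    (f : EuclideanSpace ℝ (Fin l) → EuclideanSpace ℝ (Fin (n+1)) → ℝ → EuclideanSpace ℝ (Fin (n+1)))
    (g : EuclideanSpace ℝ (Fin l) → EuclideanSpace ℝ (Fin (n+1)) → ℝ → ℝ)
    (fb : EuclideanSpace ℝ (Fin (n+1)) → ℝ → ℝ) (τ : ℕ → ℝ)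
    (d : ℝ → EuclideanSpace ℝ (Fin l))
    (x : ℝ → EuclideanSpace ℝ (Fin (n+1))) (y : ℝ → ℝ) : Prop :=
  ∃ (x' : ℝ → EuclideanSpace ℝ (Fin (n+1))) (y' : ℝ → ℝ),
    (∀ T : ℝ, IntervalIntegrable x' volume 0 T) ∧
    (∀ T : ℝ, IntervalIntegrable y' volume 0 T) ∧
    (∀ t : ℝ, 0 ≤ t → x t = x 0 + ∫ s in (0:ℝ)..t, x' s) ∧
    (∀ t : ℝ, 0 ≤ t → y t = y 0 + ∫ s in (0:ℝ)..t, y' s) ∧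
    ∀ i : ℕ, ∀ᵐ t ∂(volume.restrict (Ico (τ i) (τ (i+1)))),
      x' t = mulVecE (matA (n+1)) (x t) + f (d t) (x t) (fb (x (τ i)) (y (τ i)))
          + fb (x (τ i)) (y (τ i)) • vecb (n+1) ∧
      y' t = x t (Fin.last n) + g (d t) (x t) (fb (x (τ i)) (y (τ i)))


/-! ### Auxiliary lemmas -/

section Aux

open MeasureTheory Set

lemma ip_eq_inner {m : ℕ} (x y : EuclideanSpace ℝ (Fin m)) : ip x y = inner ℝ x y := by
  simp [ip, PiLp.inner_apply, RCLike.inner_apply, mul_comm]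

lemma abs_ip_le {m : ℕ} (x y : EuclideanSpace ℝ (Fin m)) : |ip x y| ≤ ‖x‖ * ‖y‖ := by
  rw [ip_eq_inner]; exact abs_real_inner_le_norm x y

lemma mulVecE_apply {m : ℕ} (M : Matrix (Fin m) (Fin m) ℝ) (x : EuclideanSpace ℝ (Fin m))
    (i : Fin m) : mulVecE M x i = ∑ j, M i j * x j := rfl

lemma qf_eq {m : ℕ} (P : Matrix (Fin m) (Fin m) ℝ) (x : EuclideanSpace ℝ (Fin m)) :
    qf P x = ∑ i, ∑ j, x i * (P i j * x j) := by
  simp [qf, ip, mulVecE_apply, Finset.mul_sum]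

lemma ip_sub_right {m : ℕ} (p a b : EuclideanSpace ℝ (Fin m)) :
    ip p a - ip p b = ip p (a - b) := by
  simp only [ip]
  rw [← Finset.sum_sub_distrib]
  refine Finset.sum_congr rfl fun i _ => ?_
  have : (a - b) i = a i - b i := rfl
  rw [this]; ring

lemma continuous_coord {m : ℕ} (i : Fin m) :
    Continuous (fun x : EuclideanSpace ℝ (Fin m) => x i) :=
  (continuous_apply i).comp (PiLp.continuous_ofLp 2 fun _ : Fin m => ℝ)

lemma Continuous.ipc {α : Type*} [TopologicalSpace α] {m : ℕ}
    {g h : α → EuclideanSpace ℝ (Fin m)} (hg : Continuous g) (hh : Continuous h) :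
    Continuous (fun a => ip (g a) (h a)) := by
  unfold ip
  exact continuous_finset_sum _ fun i _ =>
    ((continuous_coord i).comp hg).mul ((continuous_coord i).comp hh)

lemma continuous_mulVecE {m : ℕ} (M : Matrix (Fin m) (Fin m) ℝ) :
    Continuous (fun x : EuclideanSpace ℝ (Fin m) => mulVecE M x) := by
  unfold mulVecE
  refine (PiLp.continuous_toLp 2 fun _ : Fin m => ℝ).comp ?_
  refine continuous_pi fun i => ?_
  simp only [Matrix.mulVec, dotProduct]
  exact continuous_finset_sum _ fun j _ => continuous_const.mul (continuous_coord j)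

lemma continuous_qf {m : ℕ} (P : Matrix (Fin m) (Fin m) ℝ) :
    Continuous (fun x : EuclideanSpace ℝ (Fin m) => qf P x) := by
  unfold qf
  exact Continuous.ipc continuous_id (continuous_mulVecE P)

lemma qf_smul {m : ℕ} (P : Matrix (Fin m) (Fin m) ℝ) (c : ℝ) (x : EuclideanSpace ℝ (Fin m)) :
    qf P (c • x) = c ^ 2 * qf P x := by
  simp only [qf_eq, Finset.mul_sum]
  refine Finset.sum_congr rfl fun i _ => Finset.sum_congr rfl fun j _ => ?_
  have h1 : (c • x) i = c * x i := rfl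
  have h2 : (c • x) j = c * x j := rfl
  rw [h1, h2]; ring

lemma qf_pos {m : ℕ} {P : Matrix (Fin m) (Fin m) ℝ} (hP : P.PosDef)
    {x : EuclideanSpace ℝ (Fin m)} (hx : x ≠ 0) : 0 < qf P x := by
  have := hP.dotProduct_mulVec_pos (x := ef x) (by intro h; exact hx (by ext i; exact congrFun h i))
  simpa [qf, ip, mulVecE, dotProduct, Matrix.mulVec, ef] using this

lemma qf_coercive {n : ℕ} {P : Matrix (Fin (n+1)) (Fin (n+1)) ℝ} (hP : P.PosDef) :
    ∃ lam > 0, ∀ x : EuclideanSpace ℝ (Fin (n+1)), lam * ‖x‖ ^ 2 ≤ qf P x := by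
  obtain ⟨z, hz, hzmin⟩ := (isCompact_sphere (0 : EuclideanSpace ℝ (Fin (n+1))) 1).exists_isMinOn
    (NormedSpace.sphere_nonempty.mpr zero_le_one) (continuous_qf P).continuousOn
  have hz1 : ‖z‖ = 1 := by simpa using mem_sphere_zero_iff_norm.mp hz
  refine ⟨qf P z, qf_pos hP (by intro h; rw [h] at hz1; simp at hz1), fun x => ?_⟩
  rcases eq_or_ne x 0 with rfl | hx
  · simp [qf_eq]
  · have hxn : ‖x‖ ≠ 0 := norm_ne_zero_iff.mpr hx
    have hmem : (‖x‖⁻¹ • x) ∈ Metric.sphere (0 : EuclideanSpace ℝ (Fin (n+1))) 1 := by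
      simp [norm_smul, abs_of_nonneg (inv_nonneg.mpr (norm_nonneg x)), inv_mul_cancel₀ hxn]
    have h3 : qf P z ≤ qf P (‖x‖⁻¹ • x) := hzmin hmem
    rw [qf_smul] at h3
    have h2 : (0:ℝ) < ‖x‖ ^ 2 := by positivity
    have hinv : (‖x‖⁻¹) ^ 2 * ‖x‖ ^ 2 = 1 := by field_simp
    have h4 := mul_le_mul_of_nonneg_right h3 h2.le
    have h5 : ‖x‖⁻¹ ^ 2 * qf P x * ‖x‖ ^ 2 = qf P x := by
      rw [mul_comm (‖x‖⁻¹ ^ 2) (qf P x), mul_assoc, hinv, mul_one]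
    linarith

lemma abs_sat_le_one (s : ℝ) : |sat s| ≤ 1 := by
  have h1 : (0:ℝ) < max 1 |s| := lt_max_of_lt_left one_pos
  rw [sat, abs_div, abs_of_pos h1, div_le_one h1]
  exact le_max_right 1 |s|

lemma ip_mulVecE_symm {m : ℕ} {P : Matrix (Fin m) (Fin m) ℝ} (hPT : ∀ i j, P i j = P j i)
    (a b : EuclideanSpace ℝ (Fin m)) : ip a (mulVecE P b) = ip b (mulVecE P a) := by
  simp only [ip, mulVecE_apply, Finset.mul_sum]
  rw [Finset.sum_comm]
  refine Finset.sum_congr rfl fun i _ => Finset.sum_congr rfl fun j _ => ?_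
  rw [hPT j i]; ring

lemma key_fubini {a b : ℝ} {u v : ℝ → ℝ}
    (hu : IntegrableOn u (Ioc a b)) (hv : IntegrableOn v (Ioc a b)) :
    (∫ s in Ioc a b, u s * (∫ r in Ioc a s, v r))
      + (∫ s in Ioc a b, (∫ r in Ioc a s, u r) * v s)
    = (∫ s in Ioc a b, u s) * (∫ s in Ioc a b, v s) := by
  set μ := volume.restrict (Ioc a b) with hμ
  have hIoc : MeasurableSet (Ioc a b) := measurableSet_Ioc
  set B : ℝ × ℝ → ℝ := fun z => u z.1 * v z.2 with hB
  have hBint : Integrable B (μ.prod μ) := Integrable.mul_prod hu hv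
  set S1 : Set (ℝ × ℝ) := {z | z.2 ≤ z.1} with hS1
  set S2 : Set (ℝ × ℝ) := {z | z.1 < z.2} with hS2
  have hS1m : MeasurableSet S1 := measurableSet_le measurable_snd measurable_fst
  have hS2m : MeasurableSet S2 := measurableSet_lt measurable_fst measurable_snd
  have hF1int : Integrable (S1.indicator B) (μ.prod μ) := hBint.indicator hS1m
  have hF2int : Integrable (S2.indicator B) (μ.prod μ) := hBint.indicator hS2m
  have hGint : Integrable ((S2.indicator B) ∘ Prod.swap) (μ.prod μ) := hF2int.swap
  have hT1 : (∫ s in Ioc a b, u s * (∫ r in Ioc a s, v r))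
      = ∫ z, S1.indicator B z ∂(μ.prod μ) := by
    have e1 : (∫ s in Ioc a b, u s * (∫ r in Ioc a s, v r))
        = ∫ s, (∫ r, S1.indicator B (s, r) ∂μ) ∂μ := by
      refine setIntegral_congr_fun hIoc (fun s hs => ?_)
      have h1 : (fun r => S1.indicator B (s, r)) = (Iic s).indicator (fun r => u s * v r) := by
        funext r
        simp only [hS1, hB, Set.indicator_apply, mem_setOf_eq, mem_Iic]
      have hset : Iic s ∩ Ioc a b = Ioc a s := by
        ext r
        simp only [mem_inter_iff, mem_Iic, mem_Ioc]
        exact ⟨fun ⟨h1, h2, h3⟩ => ⟨h2, h1⟩, fun ⟨h1, h2⟩ => ⟨h2, h1, h2.trans hs.2⟩⟩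
      calc u s * (∫ r in Ioc a s, v r) = ∫ r in Ioc a s, u s * v r := by
            rw [integral_const_mul]
        _ = ∫ r in Iic s ∩ Ioc a b, u s * v r := by rw [hset]
        _ = ∫ r in Iic s, u s * v r ∂μ := by
            rw [hμ, Measure.restrict_restrict measurableSet_Iic]
        _ = ∫ r, (Iic s).indicator (fun r => u s * v r) r ∂μ := by
            rw [integral_indicator measurableSet_Iic]
        _ = ∫ r, S1.indicator B (s, r) ∂μ := by rw [h1]
    rw [e1, integral_integral (f := fun s r => S1.indicator B (s, r)) hF1int]
  have hT2 : (∫ s in Ioc a b, (∫ r in Ioc a s, u r) * v s)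
      = ∫ z, ((S2.indicator B) ∘ Prod.swap) z ∂(μ.prod μ) := by
    have e1 : (∫ s in Ioc a b, (∫ r in Ioc a s, u r) * v s)
        = ∫ s, (∫ r, ((S2.indicator B) ∘ Prod.swap) (s, r) ∂μ) ∂μ := by
      refine setIntegral_congr_fun hIoc (fun s hs => ?_)
      have h1 : (fun r => ((S2.indicator B) ∘ Prod.swap) (s, r))
          = (Iio s).indicator (fun r => u r * v s) := by
        funext r
        simp only [hS2, hB, Function.comp, Prod.swap_prod_mk, Set.indicator_apply,
          mem_setOf_eq, mem_Iio]
      have hset : Iio s ∩ Ioc a b = Ioo a s := by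
        ext r
        simp only [mem_inter_iff, mem_Iio, mem_Ioc, mem_Ioo]
        exact ⟨fun ⟨h1, h2, h3⟩ => ⟨h2, h1⟩, fun ⟨h1, h2⟩ => ⟨h2, h1, h2.le.trans hs.2⟩⟩
      calc (∫ r in Ioc a s, u r) * v s = ∫ r in Ioc a s, u r * v s := by
            rw [integral_mul_const]
        _ = ∫ r in Ioo a s, u r * v s := integral_Ioc_eq_integral_Ioo
        _ = ∫ r in Iio s ∩ Ioc a b, u r * v s := by rw [hset]
        _ = ∫ r in Iio s, u r * v s ∂μ := by
            rw [hμ, Measure.restrict_restrict measurableSet_Iio]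
        _ = ∫ r, (Iio s).indicator (fun r => u r * v s) r ∂μ := by
            rw [integral_indicator measurableSet_Iio]
        _ = ∫ r, ((S2.indicator B) ∘ Prod.swap) (s, r) ∂μ := by rw [h1]
    rw [e1, integral_integral (f := fun s r => ((S2.indicator B) ∘ Prod.swap) (s, r)) hGint]
  have hswap : ∫ z, ((S2.indicator B) ∘ Prod.swap) z ∂(μ.prod μ)
      = ∫ z, S2.indicator B z ∂(μ.prod μ) := integral_prod_swap (S2.indicator B)
  have hcover : ∀ z : ℝ × ℝ, S1.indicator B z + S2.indicator B z = B z := by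
    intro z
    by_cases h : z.2 ≤ z.1
    · rw [Set.indicator_of_mem (show z ∈ S1 from h) B,
        Set.indicator_of_notMem (show z ∉ S2 from not_lt.mpr h) B, add_zero]
    · rw [Set.indicator_of_notMem (show z ∉ S1 from h) B,
        Set.indicator_of_mem (show z ∈ S2 from lt_of_not_ge h) B, zero_add]
  rw [hT1, hT2, hswap, ← integral_add hF1int hF2int]
  simp only [hcover]
  rw [hμ]
  exact integral_prod_mul u v

lemma coord_intervalIntegrable {m : ℕ} {w : ℝ → EuclideanSpace ℝ (Fin m)} {a b : ℝ}
    (hw : IntervalIntegrable w volume a b) (i : Fin m) :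
    IntervalIntegrable (fun s => w s i) volume a b :=
  ⟨(EuclideanSpace.proj i (𝕜 := ℝ)).integrable_comp hw.1,
   (EuclideanSpace.proj i (𝕜 := ℝ)).integrable_comp hw.2⟩

lemma coord_intervalIntegral {m : ℕ} {w : ℝ → EuclideanSpace ℝ (Fin m)} {a b : ℝ}
    (hw : IntervalIntegrable w volume a b) (i : Fin m) :
    (∫ s in a..b, w s) i = ∫ s in a..b, w s i := by
  have := (EuclideanSpace.proj i (𝕜 := ℝ)).intervalIntegral_comp_comm hw
  simpa using this.symm

/-- FTC for the quadratic form along a primitive. -/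
lemma qf_FTC {m : ℕ} (P : Matrix (Fin m) (Fin m) ℝ)
    {w : ℝ → EuclideanSpace ℝ (Fin m)} {x : ℝ → EuclideanSpace ℝ (Fin m)} {a b : ℝ}
    (hab : a ≤ b) (hw : ∀ a' b' : ℝ, IntervalIntegrable w volume a' b')
    (hx : ∀ t ∈ Icc a b, x t = x a + ∫ s in a..t, w s) :
    qf P (x b) - qf P (x a)
      = ∫ s in Ioc a b, (ip (w s) (mulVecE P (x s)) + ip (x s) (mulVecE P (w s))) := by
  set U : Fin m → ℝ → ℝ := fun i t => ∫ s in a..t, w s i with hU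
  have hwc : ∀ (i : Fin m) (a' b' : ℝ), IntervalIntegrable (fun s => w s i) volume a' b' :=
    fun i a' b' => coord_intervalIntegrable (hw a' b') i
  have hUcont : ∀ i, Continuous (U i) := fun i =>
    intervalIntegral.continuous_primitive (hwc i) a
  have hxc : ∀ t ∈ Icc a b, ∀ i, x t i = x a i + U i t := by
    intro t ht i
    rw [hx t ht]
    have : (x a + ∫ s in a..t, w s) i = x a i + (∫ s in a..t, w s) i := rfl
    rw [this, coord_intervalIntegral (hw a t) i]
  have hxcont : ∀ i, ContinuousOn (fun t => x t i) (Icc a b) := by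
    intro i
    refine ContinuousOn.congr (f := fun t => x a i + U i t) ?_ (fun t ht => hxc t ht i)
    exact (continuous_const.add (hUcont i)).continuousOn
  have hwIoc : ∀ i, IntegrableOn (fun s => w s i) (Ioc a b) := fun i =>
    (intervalIntegrable_iff_integrableOn_Ioc_of_le hab).mp (hwc i a b)
  have hmix1 : ∀ i j, IntegrableOn (fun s => w s i * x s j) (Ioc a b) := by
    intro i j
    refine (intervalIntegrable_iff_integrableOn_Ioc_of_le hab).mp ?_
    exact (hwc i a b).mul_continuousOn (by rw [uIcc_of_le hab]; exact hxcont j)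
  have hmix2 : ∀ i j, IntegrableOn (fun s => x s i * w s j) (Ioc a b) := by
    intro i j
    refine (intervalIntegrable_iff_integrableOn_Ioc_of_le hab).mp ?_
    exact (hwc j a b).continuousOn_mul (by rw [uIcc_of_le hab]; exact hxcont i)
  have hpair : ∀ i j, (∫ s in Ioc a b, (w s i * x s j + x s i * w s j))
      = x b i * x b j - x a i * x a j := by
    intro i j
    have hUIoc : ∀ (k : Fin m), ∀ s ∈ Icc a b, U k s = ∫ r in Ioc a s, w r k := by
      intro k s hs
      rw [hU]
      exact intervalIntegral.integral_of_le hs.1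
    have key := key_fubini (hwIoc i) (hwIoc j)
    have congr1 : (∫ s in Ioc a b, (w s i * x s j + x s i * w s j))
        = ∫ s in Ioc a b, (w s i * x a j + x a i * w s j
            + (w s i * (∫ r in Ioc a s, w r j) + (∫ r in Ioc a s, w r i) * w s j)) := by
      refine setIntegral_congr_fun measurableSet_Ioc (fun s hs => ?_)
      have hs' : s ∈ Icc a b := ⟨hs.1.le, hs.2⟩
      rw [hxc s hs' i, hxc s hs' j, hUIoc i s hs', hUIoc j s hs']
      ring
    have hUi : ∀ s ∈ Ioc a b, (∫ r in Ioc a s, w r i) = U i s := by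
      intro s hs; rw [hUIoc i s ⟨hs.1.le, hs.2⟩]
    have hUj : ∀ s ∈ Ioc a b, (∫ r in Ioc a s, w r j) = U j s := by
      intro s hs; rw [hUIoc j s ⟨hs.1.le, hs.2⟩]
    have int1 : IntegrableOn (fun s => w s i * x a j) (Ioc a b) := (hwIoc i).mul_const _
    have int2 : IntegrableOn (fun s => x a i * w s j) (Ioc a b) := (hwIoc j).const_mul _
    have int3 : IntegrableOn (fun s => w s i * (∫ r in Ioc a s, w r j)) (Ioc a b) := by
      refine (IntegrableOn.congr_fun ?_ (fun s hs => by rw [hUj s hs]) measurableSet_Ioc)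
      refine (intervalIntegrable_iff_integrableOn_Ioc_of_le hab).mp ?_
      exact (hwc i a b).mul_continuousOn (hUcont j).continuousOn
    have int4 : IntegrableOn (fun s => (∫ r in Ioc a s, w r i) * w s j) (Ioc a b) := by
      refine (IntegrableOn.congr_fun ?_ (fun s hs => by rw [hUi s hs]) measurableSet_Ioc)
      refine (intervalIntegrable_iff_integrableOn_Ioc_of_le hab).mp ?_
      exact (hwc j a b).continuousOn_mul (hUcont i).continuousOn
    have I12 : IntegrableOn (fun s => w s i * x a j + x a i * w s j) (Ioc a b) := int1.add int2
    have I34 : IntegrableOn (fun s => w s i * (∫ r in Ioc a s, w r j)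
        + (∫ r in Ioc a s, w r i) * w s j) (Ioc a b) := int3.add int4
    rw [congr1, integral_add I12 I34, integral_add int1 int2,
      integral_add int3 int4, key, integral_mul_const, integral_const_mul]
    have hxb : ∀ k, x b k = x a k + ∫ s in Ioc a b, w s k := by
      intro k
      rw [hxc b ⟨hab, le_refl b⟩ k, hUIoc k b ⟨hab, le_refl b⟩]
    rw [hxb i, hxb j]
    ring
  have expand : ∀ s, (ip (w s) (mulVecE P (x s)) + ip (x s) (mulVecE P (w s)))
      = ∑ i, ∑ j, P i j * (w s i * x s j + x s i * w s j) := by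
    intro s
    simp only [ip, mulVecE_apply, Finset.mul_sum]
    rw [← Finset.sum_add_distrib]
    refine Finset.sum_congr rfl fun i _ => ?_
    rw [← Finset.sum_add_distrib]
    refine Finset.sum_congr rfl fun j _ => ?_
    ring
  calc qf P (x b) - qf P (x a)
      = ∑ i, ∑ j, P i j * (x b i * x b j - x a i * x a j) := by
        rw [qf_eq, qf_eq, ← Finset.sum_sub_distrib]
        refine Finset.sum_congr rfl fun i _ => ?_
        rw [← Finset.sum_sub_distrib]
        refine Finset.sum_congr rfl fun j _ => ?_
        ring
    _ = ∑ i, ∑ j, P i j * ∫ s in Ioc a b, (w s i * x s j + x s i * w s j) := by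
        simp only [hpair]
    _ = ∫ s in Ioc a b, ∑ i, ∑ j, P i j * (w s i * x s j + x s i * w s j) := by
        rw [integral_finset_sum]
        · refine Finset.sum_congr rfl fun i _ => ?_
          rw [integral_finset_sum, Finset.sum_congr rfl fun j _ => (integral_const_mul _ _).symm]
          exact fun j _ => ((hmix1 i j).add (hmix2 i j)).const_mul _
        · exact fun i _ =>
            integrable_finset_sum _ fun j _ => ((hmix1 i j).add (hmix2 i j)).const_mul _
    _ = ∫ s in Ioc a b, (ip (w s) (mulVecE P (x s)) + ip (x s) (mulVecE P (w s))) := by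
        refine setIntegral_congr_fun measurableSet_Ioc (fun s _ => ?_)
        rw [expand s]

end Aux


section Steps

open MeasureTheory Set Filter Topology

/-- Enlarged strict negativity from (3.3), by compactness. -/
lemma step1 {l n : ℕ} {D : Set (EuclideanSpace ℝ (Fin l))} (hDc : IsCompact D)
    {f : EuclideanSpace ℝ (Fin l) → EuclideanSpace ℝ (Fin (n+1)) → ℝ → EuclideanSpace ℝ (Fin (n+1))}
    (hfc : Continuous
      (fun q : EuclideanSpace ℝ (Fin l) × EuclideanSpace ℝ (Fin (n+1)) × ℝ => f q.1 q.2.1 q.2.2))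
    {P : Matrix (Fin (n+1)) (Fin (n+1)) ℝ} (hP : P.PosDef)
    {p : EuclideanSpace ℝ (Fin (n+1))} {R K : ℝ} (hK : 0 < K)
    {C : ℝ} (hC : ∀ x : EuclideanSpace ℝ (Fin (n+1)), qf P x ≤ R ^ 2 → ‖x‖ ≤ C)
    (h33 : Cond33 D f P p R K) :
    ∃ η > 0, ∀ d ∈ D, ∀ x : EuclideanSpace ℝ (Fin (n+1)), ∀ u : ℝ,
      R ^ 2 - η ≤ qf P x → qf P x ≤ R ^ 2 →
      |u - ip p x| ≤ K * |ip (cvec n p) (vecb (n+1))| + η →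
      ip x (mulVecE P (mulVecE (matA (n+1)) x + f d x u + u • vecb (n+1))) < 0 := by
  classical
  set cb : ℝ := ip (cvec n p) (vecb (n+1)) with hcb
  set F : EuclideanSpace ℝ (Fin l) × EuclideanSpace ℝ (Fin (n+1)) × ℝ → ℝ :=
    fun q => ip q.2.1 (mulVecE P
      (mulVecE (matA (n+1)) q.2.1 + f q.1 q.2.1 q.2.2 + q.2.2 • vecb (n+1))) with hF
  have hFcont : Continuous F := by
    refine Continuous.ipc (continuous_snd.fst) ?_
    refine (continuous_mulVecE P).comp ?_
    refine Continuous.add (Continuous.add ?_ hfc) ?_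
    · exact (continuous_mulVecE (matA (n+1))).comp continuous_snd.fst
    · exact (continuous_snd.snd).smul continuous_const
  by_contra hcon
  push_neg at hcon
  have hpick : ∀ m : ℕ, ∃ q : EuclideanSpace ℝ (Fin l) × EuclideanSpace ℝ (Fin (n+1)) × ℝ,
      q.1 ∈ D ∧ R ^ 2 - (1 / (m + 1) : ℝ) ≤ qf P q.2.1 ∧ qf P q.2.1 ≤ R ^ 2 ∧
      |q.2.2 - ip p q.2.1| ≤ K * |cb| + 1 / (m + 1) ∧ 0 ≤ F q := by
    intro m
    obtain ⟨d, hd, x, u, h1, h2, h3, h4⟩ := hcon (1 / (m + 1)) (by positivity)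
    exact ⟨(d, x, u), hd, h1, h2, h3, h4⟩
  choose q hq1 hq2 hq3 hq4 hq5 using hpick
  set UB : ℝ := ‖p‖ * C + K * |cb| + 1 with hUB
  set Kset : Set (EuclideanSpace ℝ (Fin l) × EuclideanSpace ℝ (Fin (n+1)) × ℝ) :=
    D ×ˢ ((Metric.closedBall 0 C) ×ˢ (Icc (-UB) UB)) with hKset
  have hKsetc : IsCompact Kset :=
    hDc.prod ((isCompact_closedBall 0 C).prod isCompact_Icc)
  have hqmem : ∀ m, q m ∈ Kset := by
    intro m
    have hxC : ‖(q m).2.1‖ ≤ C := hC _ (hq3 m)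
    have hu : |(q m).2.2| ≤ UB := by
      have h1 : |(q m).2.2| ≤ |(q m).2.2 - ip p (q m).2.1| + |ip p (q m).2.1| := by
        have := abs_add_le ((q m).2.2 - ip p (q m).2.1) (ip p (q m).2.1)
        simpa using this
      have h2 : |ip p (q m).2.1| ≤ ‖p‖ * C := by
        refine (abs_ip_le _ _).trans ?_
        exact mul_le_mul_of_nonneg_left hxC (norm_nonneg p)
      have h3 : (1 : ℝ) / (m + 1) ≤ 1 := by
        rw [div_le_one (by positivity)]
        have : (0:ℝ) ≤ (m:ℝ) := Nat.cast_nonneg m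
        linarith
      have := hq4 m
      rw [hUB]
      linarith
    refine ⟨hq1 m, ?_, ?_⟩
    · simpa [Metric.mem_closedBall, dist_eq_norm] using hxC
    · exact abs_le.mp hu
  obtain ⟨qlim, hqlim, φ, hφ, htend⟩ := hKsetc.tendsto_subseq hqmem
  have hd2 : Tendsto (fun m => (q (φ m)).2.1) atTop (nhds qlim.2.1) :=
    ((continuous_snd.fst).tendsto qlim).comp htend
  have hd3 : Tendsto (fun m => (q (φ m)).2.2) atTop (nhds qlim.2.2) :=
    ((continuous_snd.snd).tendsto qlim).comp htend
  have hqf : Tendsto (fun m => qf P (q (φ m)).2.1) atTop (nhds (qf P qlim.2.1)) :=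
    ((continuous_qf P).tendsto _).comp hd2
  have hlim0 : Tendsto (fun m : ℕ => (1 : ℝ) / (φ m + 1)) atTop (nhds 0) := by
    have h1 : Tendsto (fun m : ℕ => (1 : ℝ) / (m + 1)) atTop (nhds 0) :=
      tendsto_one_div_add_atTop_nhds_zero_nat
    exact h1.comp hφ.tendsto_atTop
  -- qf P xlim = R^2
  have hqf_le : qf P qlim.2.1 ≤ R ^ 2 :=
    le_of_tendsto hqf (Eventually.of_forall fun m => hq3 (φ m))
  have hqf_ge : R ^ 2 ≤ qf P qlim.2.1 := by
    have h2 : Tendsto (fun m : ℕ => R ^ 2 - 1 / (φ m + 1)) atTop (nhds (R ^ 2 - 0)) :=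
      tendsto_const_nhds.sub hlim0
    rw [sub_zero] at h2
    exact le_of_tendsto_of_tendsto' h2 hqf (fun m => hq2 (φ m))
  -- |ulim - p'xlim| ≤ K |cb|
  have hip : Tendsto (fun m => |(q (φ m)).2.2 - ip p (q (φ m)).2.1|) atTop
      (nhds |qlim.2.2 - ip p qlim.2.1|) := by
    refine (continuous_abs.tendsto _).comp ?_
    exact hd3.sub ((((Continuous.ipc continuous_const continuous_id : Continuous fun x : EuclideanSpace ℝ (Fin (n+1)) => ip p x)).tendsto _).comp hd2)
  have hulim : |qlim.2.2 - ip p qlim.2.1| ≤ K * |cb| := by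
    have h2 : Tendsto (fun m : ℕ => K * |cb| + 1 / (φ m + 1)) atTop (nhds (K * |cb| + 0)) :=
      tendsto_const_nhds.add hlim0
    rw [add_zero] at h2
    exact le_of_tendsto_of_tendsto' hip h2 (fun m => hq4 (φ m))
  -- F qlim ≥ 0
  have hFlim : 0 ≤ F qlim := by
    have := (hFcont.tendsto qlim).comp htend
    exact ge_of_tendsto this (Eventually.of_forall fun m => hq5 (φ m))
  have := h33 qlim.1 hqlim.1 qlim.2.1 qlim.2.2 (le_antisymm hqf_le hqf_ge) hulim
  rw [hF] at hFlim
  simp only at hFlim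
  linarith

/-- Uniform bound on the dynamics over the compact region. -/
lemma step2 {l n : ℕ} {D : Set (EuclideanSpace ℝ (Fin l))} (hDc : IsCompact D)
    {f : EuclideanSpace ℝ (Fin l) → EuclideanSpace ℝ (Fin (n+1)) → ℝ → EuclideanSpace ℝ (Fin (n+1))}
    (hfc : Continuous
      (fun q : EuclideanSpace ℝ (Fin l) × EuclideanSpace ℝ (Fin (n+1)) × ℝ => f q.1 q.2.1 q.2.2))
    (C U : ℝ) :
    ∃ B > 0, ∀ d ∈ D, ∀ x : EuclideanSpace ℝ (Fin (n+1)), ∀ u : ℝ, ‖x‖ ≤ C → |u| ≤ U →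
      ‖mulVecE (matA (n+1)) x + f d x u + u • vecb (n+1)‖ ≤ B := by
  set G : EuclideanSpace ℝ (Fin l) × EuclideanSpace ℝ (Fin (n+1)) × ℝ → EuclideanSpace ℝ (Fin (n+1)) :=
    fun q => mulVecE (matA (n+1)) q.2.1 + f q.1 q.2.1 q.2.2 + q.2.2 • vecb (n+1) with hG
  have hGcont : Continuous G := by
    refine Continuous.add (Continuous.add ?_ hfc) ?_
    · exact (continuous_mulVecE (matA (n+1))).comp continuous_snd.fst
    · exact (continuous_snd.snd).smul continuous_const
  have hKsetc : IsCompact (D ×ˢ ((Metric.closedBall (0 : EuclideanSpace ℝ (Fin (n+1))) C)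
      ×ˢ (Icc (-U) U))) :=
    hDc.prod ((isCompact_closedBall 0 C).prod isCompact_Icc)
  obtain ⟨B0, hB0⟩ := hKsetc.exists_bound_of_continuousOn hGcont.continuousOn
  refine ⟨max B0 1, lt_max_of_lt_right one_pos, fun d hd x u hx hu => ?_⟩
  have : ‖G (d, x, u)‖ ≤ B0 := by
    refine hB0 _ ⟨hd, ?_, abs_le.mp hu⟩
    simpa [Metric.mem_closedBall, dist_eq_norm] using hx
  exact this.trans (le_max_left _ _)

end Steps

set_option maxHeartbeats 2000000 in
/-- **Lemma 3.3.** Under conditions (3.3)–(3.5), for sufficiently small `r̃ > 0` the set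
`{x : x'Px < R²}` is positively invariant for the closed-loop system (3.7). -/
theorem lemma_3_3 (n l : ℕ)
    (D : Set (EuclideanSpace ℝ (Fin l))) (hD : D.Nonempty) (hDc : IsCompact D)
    (f : EuclideanSpace ℝ (Fin l) → EuclideanSpace ℝ (Fin (n+1)) → ℝ → EuclideanSpace ℝ (Fin (n+1)))
    (g : EuclideanSpace ℝ (Fin l) → EuclideanSpace ℝ (Fin (n+1)) → ℝ → ℝ)
    (hfLip : LocallyLipschitz
      (fun q : EuclideanSpace ℝ (Fin l) × EuclideanSpace ℝ (Fin (n+1)) × ℝ => f q.1 q.2.1 q.2.2))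
    (hgLip : LocallyLipschitz
      (fun q : EuclideanSpace ℝ (Fin l) × EuclideanSpace ℝ (Fin (n+1)) × ℝ => g q.1 q.2.1 q.2.2))
    (hf0 : ∀ d ∈ D, f d 0 0 = 0) (hg0 : ∀ d ∈ D, g d 0 0 = 0)
    (P : Matrix (Fin (n+1)) (Fin (n+1)) ℝ) (hP : P.PosDef)
    (p : EuclideanSpace ℝ (Fin (n+1)))
    (hneg : (-(P * (matA (n+1) + vecMulVec (vecbf (n+1)) (ef p))
        + ((matA (n+1))ᵀ + vecMulVec (ef p) (vecbf (n+1))) * P)).PosDef)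
    (M R K ω δ : ℝ) (hM : 0 < M) (hR : 0 < R) (hK : 0 < K) (hω : 0 < ω) (hδ : 0 < δ)
    (h33 : Cond33 D f P p R K) (h34 : Cond34 D f g P p R K)
    (h35 : Cond35 D f g P p M R K ω δ)
    (k : EuclideanSpace ℝ (Fin (n+1)) → ℝ) (hk0 : k 0 = 0)
    (hkb : ∀ C : ℝ, ∃ B : ℝ, ∀ x : EuclideanSpace ℝ (Fin (n+1)), ‖x‖ ≤ C → |k x| ≤ B) :
    ∃ rt : ℝ, 0 < rt ∧
      ∀ (τ : ℕ → ℝ) (d : ℝ → EuclideanSpace ℝ (Fin l))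
        (x : ℝ → EuclideanSpace ℝ (Fin (n+1))) (y : ℝ → ℝ),
        Sched rt τ → Measurable d → (∀ t : ℝ, d t ∈ D) →
        Sol37 f g (ktilde k P p R K ω) τ d x y →
        qf P (x 0) < R ^ 2 →
        ∀ t : ℝ, 0 ≤ t → qf P (x t) < R ^ 2 := by
  classical
  have hfc : Continuous
      (fun q : EuclideanSpace ℝ (Fin l) × EuclideanSpace ℝ (Fin (n+1)) × ℝ =>
        f q.1 q.2.1 q.2.2) := hfLip.continuous
  obtain ⟨lam, hlam, hcoer⟩ := qf_coercive hP
  set cb : ℝ := ip (cvec n p) (vecb (n+1)) with hcb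
  set C : ℝ := R / Real.sqrt lam with hC0
  have hsq : 0 < Real.sqrt lam := Real.sqrt_pos.mpr hlam
  have hCpos : 0 < C := div_pos hR hsq
  have hC : ∀ x : EuclideanSpace ℝ (Fin (n+1)), qf P x ≤ R ^ 2 → ‖x‖ ≤ C := by
    intro x hx
    have h1 : lam * ‖x‖ ^ 2 ≤ R ^ 2 := (hcoer x).trans hx
    have h2 : ‖x‖ ^ 2 ≤ C ^ 2 := by
      rw [hC0, div_pow, Real.sq_sqrt hlam.le, le_div_iff₀ hlam, mul_comm]
      exact h1
    nlinarith [h2, norm_nonneg x, hCpos]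
  obtain ⟨η, hη, hneg'⟩ := step1 hDc hfc hP hK hC h33
  set U : ℝ := ‖p‖ * C + K * |cb| with hU
  obtain ⟨B, hB, hBbd⟩ := step2 hDc hfc C U
  set rt : ℝ := min 1 (η / ((‖p‖ + 1) * B)) with hrt
  have hrtpos : 0 < rt := by
    refine lt_min one_pos (div_pos hη ?_)
    have : (0:ℝ) < ‖p‖ + 1 := by positivity
    exact mul_pos this hB
  refine ⟨rt, hrtpos, ?_⟩
  intro τ d x y hsch hdmeas hdD hsol hx0
  obtain ⟨w, yd, hwint, hydint, hxeq, hyeq, hode⟩ := hsol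
  have hwAll : ∀ a b : ℝ, IntervalIntegrable w volume a b :=
    fun a b => (hwint a).symm.trans (hwint b)
  set X : ℝ → EuclideanSpace ℝ (Fin (n+1)) := fun t => x 0 + ∫ s in (0:ℝ)..t, w s with hX
  have hXcont : Continuous X :=
    continuous_const.add (intervalIntegral.continuous_primitive hwAll 0)
  have hxX : ∀ t : ℝ, 0 ≤ t → x t = X t := fun t ht => hxeq t ht
  have hmono : StrictMono τ :=
    strictMono_nat_of_lt_succ (fun i => by have := hsch.2.1 i; linarith)
  have hτ0 : τ 0 = 0 := hsch.1
  have hτnonneg : ∀ i, 0 ≤ τ i := fun i => by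
    have := hmono.monotone (Nat.zero_le i); rw [hτ0] at this; exact this
  by_contra hcon
  push_neg at hcon
  obtain ⟨t1, ht1, hV1⟩ := hcon
  set S : Set ℝ := {t | 0 ≤ t ∧ R ^ 2 ≤ qf P (X t)} with hS
  have hSne : S.Nonempty := ⟨t1, ht1, by rw [← hxX t1 ht1]; exact hV1⟩
  have hScl : IsClosed S := by
    have heq : S = Ici (0:ℝ) ∩ (fun t => qf P (X t)) ⁻¹' (Ici (R ^ 2)) := by
      ext t
      simp only [hS, mem_setOf_eq, mem_inter_iff, mem_Ici, mem_preimage]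
    rw [heq]
    exact isClosed_Ici.inter (IsClosed.preimage ((continuous_qf P).comp hXcont) isClosed_Ici)
  have hSbd : BddBelow S := ⟨0, fun t ht => ht.1⟩
  set T := sInf S with hT
  have hTS : T ∈ S := hScl.csInf_mem hSne hSbd
  have hT0 : 0 ≤ T := hTS.1
  have hbefore : ∀ t, 0 ≤ t → t < T → qf P (x t) < R ^ 2 := by
    intro t ht htT
    by_contra h
    push_neg at h
    have : t ∈ S := ⟨ht, by rw [← hxX t ht]; exact h⟩
    exact absurd (csInf_le hSbd this) (not_le.mpr htT)
  have hTpos : 0 < T := by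
    rcases hT0.lt_or_eq with h | h
    · exact h
    · exfalso
      have h2 := hTS.2
      rw [← h, ← hxX 0 le_rfl] at h2
      linarith
  -- the sampling interval containing T
  have hex : ∃ j, T ≤ τ j := (hsch.2.2.2.eventually_ge_atTop T).exists
  have hj0 : Nat.find hex ≠ 0 := by
    intro h
    have := Nat.find_spec hex
    rw [h, hτ0] at this
    linarith
  obtain ⟨i, hi⟩ := Nat.exists_eq_succ_of_ne_zero hj0
  have hjT : T ≤ τ (i+1) := by
    have h := Nat.find_spec hex
    rwa [hi] at h
  have hτiT : τ i < T := not_le.mp (Nat.find_min hex (by omega))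
  -- the control value on this interval
  set u : ℝ := ktilde k P p R K ω (x (τ i)) (y (τ i)) with hu
  have hqτi : qf P (x (τ i)) < R ^ 2 := hbefore (τ i) (hτnonneg i) hτiT
  have huval : u = ip p (x (τ i)) - K * cb * sat (ω * (y (τ i) + ip (cvec n p) (x (τ i)))) := by
    rw [hu, ktilde, if_neg (not_le.mpr hqτi)]
  have hu1 : |u - ip p (x (τ i))| ≤ K * |cb| := by
    rw [huval]
    have h1 : ip p (x (τ i)) - K * cb * sat (ω * (y (τ i) + ip (cvec n p) (x (τ i))))
        - ip p (x (τ i)) = -(K * cb * sat (ω * (y (τ i) + ip (cvec n p) (x (τ i))))) := by ring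
    rw [h1, abs_neg, abs_mul, abs_mul, abs_of_pos hK]
    calc K * |cb| * |sat (ω * (y (τ i) + ip (cvec n p) (x (τ i))))| ≤ K * |cb| * 1 := by
          refine mul_le_mul_of_nonneg_left (abs_sat_le_one _) (by positivity)
      _ = K * |cb| := mul_one _
  have huU : |u| ≤ U := by
    have h1 : |u| ≤ |u - ip p (x (τ i))| + |ip p (x (τ i))| := by
      have := abs_add_le (u - ip p (x (τ i))) (ip p (x (τ i)))
      simpa using this
    have h2 : |ip p (x (τ i))| ≤ ‖p‖ * C :=
      (abs_ip_le _ _).trans (mul_le_mul_of_nonneg_left (hC _ hqτi.le) (norm_nonneg p))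
    rw [hU]; linarith
  -- global a.e. form of the ODE on the relevant interval
  have hodeG : ∀ᵐ t ∂(volume : Measure ℝ), t ∈ Ico (τ i) (τ (i+1)) →
      w t = mulVecE (matA (n+1)) (x t) + f (d t) (x t) u + u • vecb (n+1) := by
    have h := hode i
    rw [ae_restrict_iff'] at h
    · exact h.mono (fun t ht hmem => (ht hmem).1)
    · exact measurableSet_Ico
  -- pathwise bound coming from the dynamics bound
  have hxclose : ∀ s, τ i ≤ s → s < T → ‖x s - x (τ i)‖ ≤ B * (s - τ i) := by
    intro s hs1 hs2
    have hs0 : 0 ≤ s := (hτnonneg i).trans hs1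
    have hdiff : x s - x (τ i) = ∫ r in (τ i)..s, w r := by
      rw [hxeq s hs0, hxeq (τ i) (hτnonneg i), add_sub_add_left_eq_sub,
        intervalIntegral.integral_interval_sub_left (hwAll 0 s) (hwAll 0 (τ i))]
    rw [hdiff]
    have hbd : ∀ᵐ r ∂(volume : Measure ℝ), r ∈ Set.uIoc (τ i) s → ‖w r‖ ≤ B := by
      refine hodeG.mono (fun r hr hmem => ?_)
      rw [uIoc_of_le hs1] at hmem
      have hrT : r < T := lt_of_le_of_lt hmem.2 hs2
      have hr0 : 0 ≤ r := (hτnonneg i).trans hmem.1.le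
      have heq := hr ⟨hmem.1.le, lt_of_lt_of_le hrT hjT⟩
      rw [heq]
      exact hBbd (d r) (hdD r) (x r) u (hC _ (hbefore r hr0 hrT).le) huU
    have := intervalIntegral.norm_integral_le_of_norm_le_const_ae hbd
    rwa [abs_of_nonneg (by linarith)] at this
  -- choose the left endpoint of the final interval
  have hcont : ContinuousAt (fun t => qf P (X t)) T :=
    ((continuous_qf P).comp hXcont).continuousAt
  obtain ⟨σ, hσ, hσP⟩ := Metric.continuousAt_iff.mp hcont η hη
  set a : ℝ := max (τ i) (T - σ/2) with ha
  have haT : a < T := max_lt hτiT (by linarith)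
  have haτi : τ i ≤ a := le_max_left _ _
  have ha0 : 0 ≤ a := (hτnonneg i).trans haτi
  have haqf : ∀ s, a ≤ s → s ≤ T → R ^ 2 - η ≤ qf P (X s) := by
    intro s h1 h2
    have hd1 : dist s T < σ := by
      rw [Real.dist_eq, abs_of_nonpos (by linarith)]
      have : T - σ/2 ≤ a := le_max_right _ _
      linarith
    have hd2 := hσP hd1
    rw [Real.dist_eq] at hd2
    have h3 := abs_lt.mp hd2
    have h4 : R ^ 2 ≤ qf P (X T) := hTS.2
    linarith [h3.1]
  -- FTC for the quadratic form on [a, T]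
  have hxp : ∀ t ∈ Icc a T, x t = x a + ∫ s in a..t, w s := by
    intro t ht
    rw [hxeq t (ha0.trans ht.1), hxeq a ha0, add_assoc,
      intervalIntegral.integral_add_adjacent_intervals (hwAll 0 a) (hwAll a t)]
  have hFTC := qf_FTC P haT.le hwAll hxp
  -- the integrand is a.e. nonpositive
  have hPsymm : ∀ i' j', P i' j' = P j' i' := by
    intro i' j'
    have h := hP.1
    have := congrFun (congrFun h i') j'
    rw [Matrix.conjTranspose_apply] at this
    simpa using this.symm
  have hae : ∀ᵐ s ∂(volume.restrict (Ioc a T)),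
      (fun s => ip (w s) (mulVecE P (x s)) + ip (x s) (mulVecE P (w s))) s ≤ 0 := by
    have hmem : ∀ᵐ s ∂(volume.restrict (Ioc a T)), s ∈ Ioc a T :=
      ae_restrict_mem measurableSet_Ioc
    have hneT : ∀ᵐ s ∂(volume.restrict (Ioc a T)), s ≠ T := by
      have h0 : (volume.restrict (Ioc a T)) {T} = 0 := by
        rw [Measure.restrict_apply (measurableSet_singleton T)]
        exact measure_mono_null inter_subset_left (measure_singleton T)
      have hset : {s : ℝ | ¬ s ≠ T} = {T} := by ext s; simp
      rw [ae_iff, hset]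
      exact h0
    have hodeR : ∀ᵐ s ∂(volume.restrict (Ioc a T)), s ∈ Ico (τ i) (τ (i+1)) →
        w s = mulVecE (matA (n+1)) (x s) + f (d s) (x s) u + u • vecb (n+1) :=
      ae_restrict_of_ae hodeG
    filter_upwards [hmem, hneT, hodeR] with s hs hsT hODE
    have hsltT : s < T := lt_of_le_of_ne hs.2 hsT
    have hs0 : 0 ≤ s := ha0.trans hs.1.le
    have hsIco : s ∈ Ico (τ i) (τ (i+1)) :=
      ⟨haτi.trans hs.1.le, lt_of_lt_of_le hsltT hjT⟩
    have hws := hODE hsIco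
    have hqf_ub : qf P (x s) ≤ R ^ 2 := (hbefore s hs0 hsltT).le
    have hqf_lb : R ^ 2 - η ≤ qf P (x s) := by
      rw [hxX s hs0]; exact haqf s hs.1.le hs.2
    have hctl : |u - ip p (x s)| ≤ K * |cb| + η := by
      have h1 : |u - ip p (x s)| ≤ |u - ip p (x (τ i))| + |ip p (x (τ i)) - ip p (x s)| := by
        have := abs_add_le (u - ip p (x (τ i))) (ip p (x (τ i)) - ip p (x s))
        simpa using this
      have h2 : |ip p (x (τ i)) - ip p (x s)| ≤ ‖p‖ * (B * (s - τ i)) := by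
        rw [ip_sub_right]
        refine (abs_ip_le _ _).trans ?_
        refine mul_le_mul_of_nonneg_left ?_ (norm_nonneg p)
        rw [norm_sub_rev]
        exact hxclose s hsIco.1 hsltT
      have h3 : s - τ i ≤ rt := by
        have h4 := hsch.2.2.1 i
        have : s < τ (i+1) := hsIco.2
        linarith
      have h5 : ‖p‖ * (B * (s - τ i)) ≤ ‖p‖ * (B * rt) := by
        refine mul_le_mul_of_nonneg_left (mul_le_mul_of_nonneg_left h3 hB.le) (norm_nonneg p)
      have h6 : ‖p‖ * (B * rt) ≤ η := by
        have hrt2 : rt ≤ η / ((‖p‖ + 1) * B) := min_le_right _ _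
        have hp1 : (0:ℝ) < ‖p‖ + 1 := by positivity
        have h7 : rt * ((‖p‖ + 1) * B) ≤ η := (le_div_iff₀ (mul_pos hp1 hB)).mp hrt2
        have h8 : rt * ((‖p‖ + 1) * B) = ‖p‖ * (B * rt) + B * rt := by ring
        have hbrt : 0 ≤ B * rt := mul_nonneg hB.le hrtpos.le
        linarith
      linarith
    have hFneg := hneg' (d s) (hdD s) (x s) u hqf_lb hqf_ub hctl
    have heq2 : ip (w s) (mulVecE P (x s)) = ip (x s) (mulVecE P (w s)) :=
      ip_mulVecE_symm hPsymm _ _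
    rw [heq2, hws]
    linarith
  have hint_le : (∫ s in Ioc a T,
      (ip (w s) (mulVecE P (x s)) + ip (x s) (mulVecE P (w s)))) ≤ 0 :=
    integral_nonpos_of_ae hae
  have h1 : qf P (x a) < R ^ 2 := hbefore a ha0 haT
  have h2 : R ^ 2 ≤ qf P (x T) := by rw [hxX T hT0]; exact hTS.2
  linarith [hFTC]
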